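/- Closed form of variance-difference expansion for misspecified outcome regressions: E[Ψ₃²|X] - E[Ψ₁²|X] = ((1-p(X))/p(X))·(m̃₁(X)-m₁(X))² + (p(X)/(1-p(X)))·(m̃₀(X)-m₀(X))² + 2(m̃₁(X)-m₁(X))(m̃₀(X)-m₀(X)). -/

import Mathlib

open MeasureTheory ProbabilityTheory Filter
open scoped ENNReal NNReal

section Aux
variable {α : Type*} {m m0 : MeasurableSpace α} {μ : Measure α}

lemma int_l2_mul {f g : α → ℝ} (hf : MemLp f 2 μ) (hg : MemLp g 2 μ) :
    Integrable (fun ω => f ω * g ω) μ := by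
  exact hf.integrable_mul hg

lemma memℒp_bdd_mul {p : ℝ≥0∞} {f g : α → ℝ} (hf : MemLp f ⊤ μ) (hg : MemLp g p μ) :
    MemLp (fun ω => f ω * g ω) p μ := by
  have h := hg.smul (r := p) hf
  exact h.ae_eq (Filter.Eventually.of_forall fun ω => by simp [smul_eq_mul])

lemma int_bdd_mul {f g : α → ℝ} {C : ℝ} (hf : AEStronglyMeasurable f μ)
    (hC : ∀ ω, |f ω| ≤ C) (hg : Integrable g μ) :
    Integrable (fun ω => f ω * g ω) μ :=
  hg.bdd_mul hf (Eventually.of_forall fun ω => by rw [Real.norm_eq_abs]; exact hC ω)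

lemma int_mul_bdd {f g : α → ℝ} {C : ℝ} (hg : AEStronglyMeasurable g μ)
    (hC : ∀ ω, |g ω| ≤ C) (hf : Integrable f μ) :
    Integrable (fun ω => f ω * g ω) μ :=
  (int_bdd_mul hg hC hf).congr (Eventually.of_forall fun ω => mul_comm _ _)

lemma memℒp_two_condexp (hm : m ≤ m0) [IsProbabilityMeasure μ] {f : α → ℝ}
    (hf : MemLp f 2 μ) : MemLp (μ[f|m]) 2 μ := by
  have key : (fun a => ((condExpL2 ℝ ℝ hm (hf.toLp f)) : α →₂[μ] ℝ) a) =ᵐ[μ] μ[f|m] := by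
    refine ae_eq_condExp_of_forall_setIntegral_eq hm (hf.integrable one_le_two)
      (fun s hs hμs => integrableOn_condExpL2_of_measure_ne_top hm hμs.ne _)
      (fun s hs hμs => ?_) (aestronglyMeasurable_condExpL2 hm _)
    rw [integral_condExpL2_eq hm (hf.toLp f) hs hμs.ne]
    exact setIntegral_congr_ae (hm s hs) ((hf.coeFn_toLp).mono fun x hx _ => hx)
  exact (Lp.memLp _).ae_eq key

end Aux

set_option maxHeartbeats 1000000 in
/-- **Closed form of the variance-difference expansion for misspecified outcome regressions.**
With `Ψ₁` the correct doubly robust score and `Ψ₃` the score using the true propensity score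
`p(X)` but misspecified outcome regressions `m̃₁, m̃₀`,
`E[Ψ₃²|X] - E[Ψ₁²|X] = ((1-p(X))/p(X))·(m̃₁(X)-m₁(X))²
  + (p(X)/(1-p(X)))·(m̃₀(X)-m₀(X))² + 2(m̃₁(X)-m₁(X))(m̃₀(X)-m₀(X))`. -/
theorem variance_difference_closed_form
    {Ω E : Type*} [MeasurableSpace Ω] [StandardBorelSpace Ω] [Nonempty Ω]
    [mE : MeasurableSpace E]
    (μ : Measure Ω) [IsProbabilityMeasure μ]
    (X : Ω → E) (hX : Measurable X)
    (D Y1 Y0 Y : Ω → ℝ)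
    (hD : Measurable D) (hD01 : ∀ ω, D ω = 0 ∨ D ω = 1)
    (hY1m : Measurable Y1) (hY0m : Measurable Y0)
    (hY1 : MemLp Y1 2 μ) (hY0 : MemLp Y0 2 μ)
    (hY : ∀ ω, Y ω = D ω * Y1 ω + (1 - D ω) * Y0 ω)
    (hUnconf : CondIndepFun (MeasurableSpace.comap X mE) hX.comap_le
      (fun ω => (Y1 ω, Y0 ω)) D μ)
    (pX : Ω → ℝ)
    (hpX : pX =ᵐ[μ] μ[D | MeasurableSpace.comap X mE])
    (ε : ℝ) (hε : 0 < ε) (hpb : ∀ ω, ε ≤ pX ω ∧ pX ω ≤ 1 - ε)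
    (m1 m0 : Ω → ℝ)
    (hm1meas : StronglyMeasurable[MeasurableSpace.comap X mE] m1)
    (hm0meas : StronglyMeasurable[MeasurableSpace.comap X mE] m0)
    (hm1 : μ[fun ω => D ω * Y ω | MeasurableSpace.comap X mE]
      =ᵐ[μ] fun ω => pX ω * m1 ω)
    (hm0 : μ[fun ω => (1 - D ω) * Y ω | MeasurableSpace.comap X mE]
      =ᵐ[μ] fun ω => (1 - pX ω) * m0 ω)
    (mtilde1 mtilde0 : E → ℝ)
    (hmt1 : Measurable mtilde1) (hmt0 : Measurable mtilde0)
    (hmt1sq : MemLp (fun ω => mtilde1 (X ω)) 2 μ)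
    (hmt0sq : MemLp (fun ω => mtilde0 (X ω)) 2 μ) :
    (fun ω =>
        (μ[fun ω' => (D ω' * (Y ω' - mtilde1 (X ω')) / pX ω'
              - (1 - D ω') * (Y ω' - mtilde0 (X ω')) / (1 - pX ω')
              + mtilde1 (X ω') - mtilde0 (X ω')) ^ 2 | MeasurableSpace.comap X mE]) ω
        - (μ[fun ω' => (D ω' * (Y ω' - m1 ω') / pX ω'
              - (1 - D ω') * (Y ω' - m0 ω') / (1 - pX ω')
              + m1 ω' - m0 ω') ^ 2 | MeasurableSpace.comap X mE]) ω)
      =ᵐ[μ] fun ω =>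
        ((1 - pX ω) / pX ω) * (mtilde1 (X ω) - m1 ω) ^ 2
          + (pX ω / (1 - pX ω)) * (mtilde0 (X ω) - m0 ω) ^ 2
          + 2 * (mtilde1 (X ω) - m1 ω) * (mtilde0 (X ω) - m0 ω) := by
  have hle : MeasurableSpace.comap X mE ≤ ‹MeasurableSpace Ω› := hX.comap_le
  obtain ⟨ω₀⟩ := ‹Nonempty Ω›
  have hεhalf : ε ≤ 1 - ε := le_trans (hpb ω₀).1 (hpb ω₀).2
  -- the measurable clamped version of the propensity score
  set p' : Ω → ℝ := fun ω => max ε (min (1 - ε) ((μ[D|MeasurableSpace.comap X mE]) ω)) with hp'def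
  have hp'lb : ∀ ω, ε ≤ p' ω := fun ω => le_max_left _ _
  have hp'ub : ∀ ω, p' ω ≤ 1 - ε := fun ω => max_le hεhalf (min_le_left _ _)
  have hp'pos : ∀ ω, 0 < p' ω := fun ω => lt_of_lt_of_le hε (hp'lb ω)
  have hq'lb : ∀ ω, ε ≤ 1 - p' ω := fun ω => by linarith [hp'ub ω]
  have hq'pos : ∀ ω, 0 < 1 - p' ω := fun ω => lt_of_lt_of_le hε (hq'lb ω)
  have hp'ne : ∀ ω, p' ω ≠ 0 := fun ω => (hp'pos ω).ne'
  have hq'ne : ∀ ω, 1 - p' ω ≠ 0 := fun ω => (hq'pos ω).ne'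
  have hpp' : pX =ᵐ[μ] p' := by
    filter_upwards [hpX] with ω h
    simp only [hp'def]
    rw [← h, min_eq_right (hpb ω).2, max_eq_right (hpb ω).1]
  have hDp' : (μ[D|MeasurableSpace.comap X mE]) =ᵐ[μ] p' := hpX.symm.trans hpp'
  -- measurability
  have hXm𝓧 : Measurable[MeasurableSpace.comap X mE] X := measurable_iff_comap_le.mpr le_rfl
  have ht1m𝓧 : Measurable[MeasurableSpace.comap X mE] (fun ω => mtilde1 (X ω)) := hmt1.comp hXm𝓧
  have ht0m𝓧 : Measurable[MeasurableSpace.comap X mE] (fun ω => mtilde0 (X ω)) := hmt0.comp hXm𝓧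
  have hm1m𝓧 : Measurable[MeasurableSpace.comap X mE] m1 := hm1meas.measurable
  have hm0m𝓧 : Measurable[MeasurableSpace.comap X mE] m0 := hm0meas.measurable
  have hp'm𝓧 : Measurable[MeasurableSpace.comap X mE] p' :=
    measurable_const.max (measurable_const.min stronglyMeasurable_condExp.measurable)
  have hp'mΩ : Measurable p' := hp'm𝓧.mono hle le_rfl
  have hYeq : Y = fun ω => D ω * Y1 ω + (1 - D ω) * Y0 ω := funext hY
  have hYm : Measurable Y := by
    rw [hYeq]; exact (hD.mul hY1m).add ((measurable_const.sub hD).mul hY0m)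
  -- basic bounds on D
  have hDbd : ∀ ω, |D ω| ≤ 1 := fun ω => by rcases hD01 ω with h | h <;> simp [h]
  have h1Dbd : ∀ ω, |1 - D ω| ≤ 1 := fun ω => by rcases hD01 ω with h | h <;> simp [h]
  have hDtop : MemLp D ⊤ μ := memLp_top_of_bound hD.aestronglyMeasurable 1
      (Eventually.of_forall fun ω => by rw [Real.norm_eq_abs]; exact hDbd ω)
  have h1Dtop : MemLp (fun ω => 1 - D ω) ⊤ μ :=
    memLp_top_of_bound ((measurable_const.sub hD).aestronglyMeasurable) 1
      (Eventually.of_forall fun ω => by rw [Real.norm_eq_abs]; exact h1Dbd ω)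
  have hDint : Integrable D μ := (hDtop.mono_exponent le_top).integrable le_rfl
  -- L² facts
  have hYL2 : MemLp Y 2 μ := by
    refine MemLp.of_le (hY1.norm.add hY0.norm) hYm.aestronglyMeasurable
      (Eventually.of_forall fun ω => ?_)
    have h1 : |Y ω| ≤ |Y1 ω| + |Y0 ω| := by
      rw [hY ω]
      refine (abs_add_le _ _).trans (add_le_add ?_ ?_)
      · rw [abs_mul]; exact mul_le_of_le_one_left (abs_nonneg _) (hDbd ω)
      · rw [abs_mul]; exact mul_le_of_le_one_left (abs_nonneg _) (h1Dbd ω)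
    simp only [Real.norm_eq_abs]
    exact h1.trans (le_abs_self _)
  have hDYL2 : MemLp (fun ω => D ω * Y ω) 2 μ := memℒp_bdd_mul hDtop hYL2
  have h1DYL2 : MemLp (fun ω => (1 - D ω) * Y ω) 2 μ := memℒp_bdd_mul h1Dtop hYL2
  have hm1L2 : MemLp m1 2 μ := by
    refine MemLp.of_le ((memℒp_two_condexp hle hDYL2).const_mul ε⁻¹)
      ((hm1m𝓧.mono hle le_rfl).aestronglyMeasurable) ?_
    filter_upwards [hm1] with ω h
    simp only [Real.norm_eq_abs]
    rw [abs_mul, h, abs_mul, abs_of_nonneg (by positivity : (0:ℝ) ≤ ε⁻¹),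
      abs_of_nonneg (by linarith [(hpb ω).1] : (0:ℝ) ≤ pX ω)]
    calc |m1 ω| = ε⁻¹ * (ε * |m1 ω|) := by field_simp
    _ ≤ ε⁻¹ * (pX ω * |m1 ω|) := by
        have := mul_le_mul_of_nonneg_right (hpb ω).1 (abs_nonneg (m1 ω))
        exact mul_le_mul_of_nonneg_left this (by positivity)
  have hm0L2 : MemLp m0 2 μ := by
    refine MemLp.of_le ((memℒp_two_condexp hle h1DYL2).const_mul ε⁻¹)
      ((hm0m𝓧.mono hle le_rfl).aestronglyMeasurable) ?_
    filter_upwards [hm0] with ω h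
    simp only [Real.norm_eq_abs]
    have hq : ε ≤ 1 - pX ω := by linarith [(hpb ω).2]
    rw [abs_mul, h, abs_mul, abs_of_nonneg (by positivity : (0:ℝ) ≤ ε⁻¹),
      abs_of_nonneg (by linarith : (0:ℝ) ≤ 1 - pX ω)]
    calc |m0 ω| = ε⁻¹ * (ε * |m0 ω|) := by field_simp
    _ ≤ ε⁻¹ * ((1 - pX ω) * |m0 ω|) := by
        have := mul_le_mul_of_nonneg_right hq (abs_nonneg (m0 ω))
        exact mul_le_mul_of_nonneg_left this (by positivity)
  -- bounded inverse weights
  have hip : MemLp (fun ω => (p' ω)⁻¹) ⊤ μ := by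
    refine memLp_top_of_bound (hp'mΩ.inv).aestronglyMeasurable ε⁻¹
      (Eventually.of_forall fun ω => ?_)
    rw [Real.norm_eq_abs, abs_of_nonneg (le_of_lt (inv_pos.mpr (hp'pos ω)))]
    exact inv_anti₀ hε (hp'lb ω)
  have hiq : MemLp (fun ω => (1 - p' ω)⁻¹) ⊤ μ := by
    refine memLp_top_of_bound ((measurable_const.sub hp'mΩ).inv).aestronglyMeasurable ε⁻¹
      (Eventually.of_forall fun ω => ?_)
    rw [Real.norm_eq_abs, abs_of_nonneg (le_of_lt (inv_pos.mpr (hq'pos ω)))]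
    exact inv_anti₀ hε (hq'lb ω)
  have hip2 : MemLp (fun ω => (p' ω ^ 2)⁻¹) ⊤ μ := by
    refine memLp_top_of_bound ((hp'mΩ.pow_const 2).inv).aestronglyMeasurable (ε^2)⁻¹
      (Eventually.of_forall fun ω => ?_)
    rw [Real.norm_eq_abs, abs_of_nonneg (le_of_lt (inv_pos.mpr (pow_pos (hp'pos ω) 2)))]
    exact inv_anti₀ (pow_pos hε 2) (by nlinarith [hp'lb ω, hp'pos ω])
  have hiq2 : MemLp (fun ω => ((1 - p' ω) ^ 2)⁻¹) ⊤ μ := by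
    refine memLp_top_of_bound (((measurable_const.sub hp'mΩ).pow_const 2).inv).aestronglyMeasurable
      (ε^2)⁻¹ (Eventually.of_forall fun ω => ?_)
    rw [Real.norm_eq_abs, abs_of_nonneg (le_of_lt (inv_pos.mpr (pow_pos (hq'pos ω) 2)))]
    exact inv_anti₀ (pow_pos hε 2) (by nlinarith [hq'lb ω, hq'pos ω])
  have hip2abs : ∀ ω, |(p' ω ^ 2)⁻¹| ≤ (ε^2)⁻¹ := fun ω => by
    rw [abs_of_nonneg (le_of_lt (inv_pos.mpr (pow_pos (hp'pos ω) 2)))]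
    exact inv_anti₀ (pow_pos hε 2) (by nlinarith [hp'lb ω, hp'pos ω])
  have hiq2abs : ∀ ω, |((1 - p' ω) ^ 2)⁻¹| ≤ (ε^2)⁻¹ := fun ω => by
    rw [abs_of_nonneg (le_of_lt (inv_pos.mpr (pow_pos (hq'pos ω) 2)))]
    exact inv_anti₀ (pow_pos hε 2) (by nlinarith [hq'lb ω, hq'pos ω])
  have hipabs : ∀ ω, |(p' ω)⁻¹| ≤ ε⁻¹ := fun ω => by
    rw [abs_of_nonneg (le_of_lt (inv_pos.mpr (hp'pos ω)))]
    exact inv_anti₀ hε (hp'lb ω)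
  have hiqabs : ∀ ω, |(1 - p' ω)⁻¹| ≤ ε⁻¹ := fun ω => by
    rw [abs_of_nonneg (le_of_lt (inv_pos.mpr (hq'pos ω)))]
    exact inv_anti₀ hε (hq'lb ω)
  -- the two scores with clamped propensity
  set Ψt : Ω → ℝ := fun ω => D ω * (Y ω - mtilde1 (X ω)) / p' ω
      - (1 - D ω) * (Y ω - mtilde0 (X ω)) / (1 - p' ω)
      + mtilde1 (X ω) - mtilde0 (X ω) with hΨtdef
  set Ψm : Ω → ℝ := fun ω => D ω * (Y ω - m1 ω) / p' ω
      - (1 - D ω) * (Y ω - m0 ω) / (1 - p' ω)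
      + m1 ω - m0 ω with hΨmdef
  have hDpTop : MemLp (fun ω => D ω / p' ω) ⊤ μ := by
    refine memLp_top_of_bound (hD.div hp'mΩ).aestronglyMeasurable ε⁻¹
      (Eventually.of_forall fun ω => ?_)
    rw [Real.norm_eq_abs, abs_div, abs_of_pos (hp'pos ω), ← one_div ε]
    exact div_le_div₀ zero_le_one (hDbd ω) hε (hp'lb ω)
  have hDqTop : MemLp (fun ω => (1 - D ω) / (1 - p' ω)) ⊤ μ := by
    refine memLp_top_of_bound ((measurable_const.sub hD).div
      (measurable_const.sub hp'mΩ)).aestronglyMeasurable ε⁻¹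
      (Eventually.of_forall fun ω => ?_)
    rw [Real.norm_eq_abs, abs_div, abs_of_pos (hq'pos ω), ← one_div ε]
    exact div_le_div₀ zero_le_one (h1Dbd ω) hε (hq'lb ω)
  have hΨtL2 : MemLp Ψt 2 μ := by
    have h1 := memℒp_bdd_mul hDpTop (hYL2.sub hmt1sq)
    have h2 := memℒp_bdd_mul hDqTop (hYL2.sub hmt0sq)
    have h3 := ((h1.sub h2).add hmt1sq).sub hmt0sq
    exact h3.ae_eq (Eventually.of_forall fun ω => by
      simp only [Pi.add_apply, Pi.sub_apply, hΨtdef]; ring)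
  have hΨmL2 : MemLp Ψm 2 μ := by
    have h1 := memℒp_bdd_mul hDpTop (hYL2.sub hm1L2)
    have h2 := memℒp_bdd_mul hDqTop (hYL2.sub hm0L2)
    have h3 := ((h1.sub h2).add hm1L2).sub hm0L2
    exact h3.ae_eq (Eventually.of_forall fun ω => by
      simp only [Pi.add_apply, Pi.sub_apply, hΨmdef]; ring)
  -- conditional expectations of the original integrands
  have hFt : (fun ω' => (D ω' * (Y ω' - mtilde1 (X ω')) / pX ω'
        - (1 - D ω') * (Y ω' - mtilde0 (X ω')) / (1 - pX ω')
        + mtilde1 (X ω') - mtilde0 (X ω')) ^ 2) =ᵐ[μ] fun ω => Ψt ω ^ 2 := by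
    filter_upwards [hpp'] with ω h
    simp only [hΨtdef]
    rw [h]
  have hFm : (fun ω' => (D ω' * (Y ω' - m1 ω') / pX ω'
        - (1 - D ω') * (Y ω' - m0 ω') / (1 - pX ω')
        + m1 ω' - m0 ω') ^ 2) =ᵐ[μ] fun ω => Ψm ω ^ 2 := by
    filter_upwards [hpp'] with ω h
    simp only [hΨmdef]
    rw [h]
  -- the coefficients
  set c1 : Ω → ℝ := fun ω => (p' ω ^ 2)⁻¹ * (2 * (m1 ω - mtilde1 (X ω)))
      + (p' ω)⁻¹ * (2 * (mtilde1 (X ω) - mtilde0 (X ω) - m1 ω + m0 ω)) with hc1def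
  set c2 : Ω → ℝ := fun ω => (p' ω ^ 2)⁻¹ * (mtilde1 (X ω) ^ 2 - m1 ω ^ 2)
      + (p' ω)⁻¹ * (2 * (-(mtilde1 (X ω)) * (mtilde1 (X ω) - mtilde0 (X ω))
          + m1 ω * (m1 ω - m0 ω))) with hc2def
  set c3 : Ω → ℝ := fun ω => ((1 - p' ω) ^ 2)⁻¹ * (2 * (m0 ω - mtilde0 (X ω)))
      + (1 - p' ω)⁻¹ * (2 * (m1 ω - m0 ω - mtilde1 (X ω) + mtilde0 (X ω))) with hc3def
  set c4 : Ω → ℝ := fun ω => ((1 - p' ω) ^ 2)⁻¹ * (mtilde0 (X ω) ^ 2 - m0 ω ^ 2)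
      + (1 - p' ω)⁻¹ * (2 * (mtilde0 (X ω) * (mtilde1 (X ω) - mtilde0 (X ω))
          - m0 ω * (m1 ω - m0 ω))) with hc4def
  set c5 : Ω → ℝ := fun ω => (mtilde1 (X ω) - mtilde0 (X ω)) ^ 2
      - (m1 ω - m0 ω) ^ 2 with hc5def
  -- strong measurability of coefficients
  have hc1sm : StronglyMeasurable[MeasurableSpace.comap X mE] c1 :=
    ((((hp'm𝓧.pow_const 2).inv).mul ((hm1m𝓧.sub ht1m𝓧).const_mul 2)).add
      ((hp'm𝓧.inv).mul ((((ht1m𝓧.sub ht0m𝓧).sub hm1m𝓧).add hm0m𝓧).const_mul 2))).stronglyMeasurable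
  have hc2sm : StronglyMeasurable[MeasurableSpace.comap X mE] c2 :=
    ((((hp'm𝓧.pow_const 2).inv).mul ((ht1m𝓧.pow_const 2).sub (hm1m𝓧.pow_const 2))).add
      ((hp'm𝓧.inv).mul ((((ht1m𝓧.neg).mul (ht1m𝓧.sub ht0m𝓧)).add
        (hm1m𝓧.mul (hm1m𝓧.sub hm0m𝓧))).const_mul 2))).stronglyMeasurable
  have hc3sm : StronglyMeasurable[MeasurableSpace.comap X mE] c3 :=
    (((((measurable_const.sub hp'm𝓧).pow_const 2).inv).mul
        ((hm0m𝓧.sub ht0m𝓧).const_mul 2)).add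
      (((measurable_const.sub hp'm𝓧).inv).mul
        ((((hm1m𝓧.sub hm0m𝓧).sub ht1m𝓧).add ht0m𝓧).const_mul 2))).stronglyMeasurable
  have hc4sm : StronglyMeasurable[MeasurableSpace.comap X mE] c4 :=
    (((((measurable_const.sub hp'm𝓧).pow_const 2).inv).mul
        ((ht0m𝓧.pow_const 2).sub (hm0m𝓧.pow_const 2))).add
      (((measurable_const.sub hp'm𝓧).inv).mul
        (((ht0m𝓧.mul (ht1m𝓧.sub ht0m𝓧)).sub
          (hm0m𝓧.mul (hm1m𝓧.sub hm0m𝓧))).const_mul 2))).stronglyMeasurable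
  have hc5sm : StronglyMeasurable[MeasurableSpace.comap X mE] c5 :=
    (((ht1m𝓧.sub ht0m𝓧).pow_const 2).sub ((hm1m𝓧.sub hm0m𝓧).pow_const 2)).stronglyMeasurable
  -- L² / integrability of coefficients
  have hc1L2 : MemLp c1 2 μ :=
    (memℒp_bdd_mul hip2 ((hm1L2.sub hmt1sq).const_mul 2)).add
      (memℒp_bdd_mul hip ((((hmt1sq.sub hmt0sq).sub hm1L2).add hm0L2).const_mul 2))
  have hc3L2 : MemLp c3 2 μ :=
    (memℒp_bdd_mul hiq2 ((hm0L2.sub hmt0sq).const_mul 2)).add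
      (memℒp_bdd_mul hiq ((((hm1L2.sub hm0L2).sub hmt1sq).add hmt0sq).const_mul 2))
  have hc2int : Integrable c2 μ := by
    refine Integrable.add ?_ ?_
    · exact int_bdd_mul ((hp'mΩ.pow_const 2).inv).aestronglyMeasurable hip2abs
        ((hmt1sq.integrable_sq).sub (hm1L2.integrable_sq))
    · exact int_bdd_mul (hp'mΩ.inv).aestronglyMeasurable hipabs
        (((int_l2_mul hmt1sq.neg (hmt1sq.sub hmt0sq)).add
          (int_l2_mul hm1L2 (hm1L2.sub hm0L2))).const_mul 2)
  have hc4int : Integrable c4 μ := by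
    refine Integrable.add ?_ ?_
    · exact int_bdd_mul (((measurable_const.sub hp'mΩ).pow_const 2).inv).aestronglyMeasurable
        hiq2abs ((hmt0sq.integrable_sq).sub (hm0L2.integrable_sq))
    · exact int_bdd_mul ((measurable_const.sub hp'mΩ).inv).aestronglyMeasurable hiqabs
        (((int_l2_mul hmt0sq (hmt1sq.sub hmt0sq)).sub
          (int_l2_mul hm0L2 (hm1L2.sub hm0L2))).const_mul 2)
  have hc5int : Integrable c5 μ :=
    ((hmt1sq.sub hmt0sq).integrable_sq).sub ((hm1L2.sub hm0L2).integrable_sq)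
  -- the atoms
  set g1 : Ω → ℝ := fun ω => D ω * Y1 ω with hg1def
  set g0 : Ω → ℝ := fun ω => (1 - D ω) * Y0 ω with hg0def
  have hg1L2 : MemLp g1 2 μ := memℒp_bdd_mul hDtop hY1
  have hg0L2 : MemLp g0 2 μ := memℒp_bdd_mul h1Dtop hY0
  have hg1int : Integrable g1 μ := hg1L2.integrable one_le_two
  have hg0int : Integrable g0 μ := hg0L2.integrable one_le_two
  have h1Dint : Integrable (fun ω => 1 - D ω) μ := (integrable_const 1).sub hDint
  -- the summands
  set s1 : Ω → ℝ := fun ω => c1 ω * g1 ω with hs1def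
  set s2 : Ω → ℝ := fun ω => c2 ω * D ω with hs2def
  set s3 : Ω → ℝ := fun ω => c3 ω * g0 ω with hs3def
  set s4 : Ω → ℝ := fun ω => c4 ω * (1 - D ω) with hs4def
  have i1 : Integrable s1 μ := int_l2_mul hc1L2 hg1L2
  have i2 : Integrable s2 μ := int_mul_bdd hD.aestronglyMeasurable hDbd hc2int
  have i3 : Integrable s3 μ := int_l2_mul hc3L2 hg0L2
  have i4 : Integrable s4 μ :=
    int_mul_bdd (measurable_const.sub hD).aestronglyMeasurable h1Dbd hc4int
  -- pointwise decomposition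
  have hdecomp : ∀ ω, Ψt ω ^ 2 - Ψm ω ^ 2 = s1 ω + s2 ω + s3 ω + s4 ω + c5 ω := by
    intro ω
    have hYω := hY ω
    rcases hD01 ω with h | h <;> rw [h] at hYω <;>
      simp only [hs1def, hs2def, hs3def, hs4def, hg1def, hg0def, hc1def, hc2def, hc3def,
        hc4def, hc5def, hΨtdef, hΨmdef, h] <;>
      rw [hYω] <;> field_simp [hp'ne ω, hq'ne ω] <;> ring
  -- conditional expectations of the atoms
  have hDY1eq : ∀ ω, g1 ω = D ω * Y ω := by
    intro ω
    rcases hD01 ω with h | h <;> simp only [hg1def, hY ω, h] <;> ring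
  have h1DY0eq : ∀ ω, g0 ω = (1 - D ω) * Y ω := by
    intro ω
    rcases hD01 ω with h | h <;> simp only [hg0def, hY ω, h] <;> ring
  have hg1ce : μ[g1|MeasurableSpace.comap X mE] =ᵐ[μ] fun ω => p' ω * m1 ω := by
    refine (condExp_congr_ae (Eventually.of_forall hDY1eq)).trans (hm1.trans ?_)
    filter_upwards [hpp'] with ω h
    rw [h]
  have hg0ce : μ[g0|MeasurableSpace.comap X mE] =ᵐ[μ] fun ω => (1 - p' ω) * m0 ω := by
    refine (condExp_congr_ae (Eventually.of_forall h1DY0eq)).trans (hm0.trans ?_)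
    filter_upwards [hpp'] with ω h
    rw [h]
  have h1Dce : μ[fun ω => 1 - D ω|MeasurableSpace.comap X mE] =ᵐ[μ] fun ω => 1 - p' ω := by
    refine (condExp_sub (integrable_const 1) hDint _).trans ?_
    filter_upwards [hDp'] with ω h
    simp only [Pi.sub_apply, condExp_const hle, h]
  -- conditional expectations of the summands
  have e1 : μ[s1|MeasurableSpace.comap X mE] =ᵐ[μ] fun ω => c1 ω * (p' ω * m1 ω) := by
    refine (condExp_mul_of_stronglyMeasurable_left hc1sm i1 hg1int).trans ?_
    filter_upwards [hg1ce] with ω h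
    simp only [Pi.mul_apply, h]
  have e2 : μ[s2|MeasurableSpace.comap X mE] =ᵐ[μ] fun ω => c2 ω * p' ω := by
    refine (condExp_mul_of_stronglyMeasurable_left hc2sm i2 hDint).trans ?_
    filter_upwards [hDp'] with ω h
    simp only [Pi.mul_apply, h]
  have e3 : μ[s3|MeasurableSpace.comap X mE] =ᵐ[μ] fun ω => c3 ω * ((1 - p' ω) * m0 ω) := by
    refine (condExp_mul_of_stronglyMeasurable_left hc3sm i3 hg0int).trans ?_
    filter_upwards [hg0ce] with ω h
    simp only [Pi.mul_apply, h]
  have e4 : μ[s4|MeasurableSpace.comap X mE] =ᵐ[μ] fun ω => c4 ω * (1 - p' ω) := by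
    refine (condExp_mul_of_stronglyMeasurable_left hc4sm i4 h1Dint).trans ?_
    filter_upwards [h1Dce] with ω h
    simp only [Pi.mul_apply, h]
  have e5 : μ[c5|MeasurableSpace.comap X mE] =ᵐ[μ] c5 := by
    rw [condExp_of_stronglyMeasurable hle hc5sm hc5int]
  -- conditional expectation of the sum
  have hA : μ[s1 + s2 + s3 + s4 + c5|MeasurableSpace.comap X mE]
      =ᵐ[μ] μ[s1|MeasurableSpace.comap X mE] + μ[s2|MeasurableSpace.comap X mE] + μ[s3|MeasurableSpace.comap X mE] + μ[s4|MeasurableSpace.comap X mE] + μ[c5|MeasurableSpace.comap X mE] := by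
    refine (condExp_add (((i1.add i2).add i3).add i4) hc5int _).trans
      (EventuallyEq.add ?_ EventuallyEq.rfl)
    refine (condExp_add ((i1.add i2).add i3) i4 _).trans (EventuallyEq.add ?_ EventuallyEq.rfl)
    refine (condExp_add (i1.add i2) i3 _).trans (EventuallyEq.add ?_ EventuallyEq.rfl)
    exact condExp_add i1 i2 _
  -- the final algebraic identity
  have hfinal : ∀ᵐ ω ∂μ, c1 ω * (p' ω * m1 ω) + c2 ω * p' ω + c3 ω * ((1 - p' ω) * m0 ω)
      + c4 ω * (1 - p' ω) + c5 ω
      = ((1 - pX ω) / pX ω) * (mtilde1 (X ω) - m1 ω) ^ 2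
        + (pX ω / (1 - pX ω)) * (mtilde0 (X ω) - m0 ω) ^ 2
        + 2 * (mtilde1 (X ω) - m1 ω) * (mtilde0 (X ω) - m0 ω) := by
    filter_upwards [hpp'] with ω h
    rw [h]
    simp only [hc1def, hc2def, hc3def, hc4def, hc5def]
    field_simp [hp'ne ω, hq'ne ω]
    ring
  -- put everything together
  have hsub := condExp_sub (m := MeasurableSpace.comap X mE) (hΨtL2.integrable_sq) (hΨmL2.integrable_sq)
  have hdec : μ[(fun ω => Ψt ω ^ 2) - fun ω => Ψm ω ^ 2|MeasurableSpace.comap X mE]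
      =ᵐ[μ] μ[s1 + s2 + s3 + s4 + c5|MeasurableSpace.comap X mE] := by
    refine condExp_congr_ae (Eventually.of_forall fun ω => ?_)
    simp only [Pi.sub_apply, Pi.add_apply]
    exact hdecomp ω
  have hTT := condExp_congr_ae (m := MeasurableSpace.comap X mE) hFt
  have hMM := condExp_congr_ae (m := MeasurableSpace.comap X mE) hFm
  filter_upwards [hTT, hMM, hsub, hdec, hA, e1, e2, e3, e4, e5, hfinal] with ω
    hT hM h3 h4 h5 q1 q2 q3 q4 q5 hfin
  simp only [Pi.sub_apply] at h3
  simp only [Pi.add_apply] at h5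
  rw [hT, hM, ← h3, h4, h5, q1, q2, q3, q4, q5]
  exact hfin
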